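/- Let Γ be a finite abelian group and S ⊆ Γ nonempty with S = −S. If the Cayley graph Cay(Γ,S) is integral (all adjacency eigenvalues are integers), then for every a ∈ Γ either Atom(a) ⊆ S or Atom(a) ∩ S = ∅. -/

import Mathlib

open Pointwise

/-- The Boolean algebra of subsets of `Γ` generated by the subgroups of `Γ`. -/
inductive InB (Γ : Type*) [AddGroup Γ] : Set Γ → Prop
  | subgroup (H : AddSubgroup Γ) : InB Γ (H : Set Γ)
  | compl {S : Set Γ} : InB Γ S → InB Γ Sᶜ
  | union {S T : Set Γ} : InB Γ S → InB Γ T → InB Γ (S ∪ T)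

/-- `Atom a` is the set of elements generating the same cyclic subgroup as `a`. -/
def Atom {Γ : Type*} [AddGroup Γ] (a : Γ) : Set Γ :=
  {b | AddSubgroup.zmultiples a = AddSubgroup.zmultiples b}


open Finset in
open scoped Classical in
lemma specA {Γ : Type*} [AddCommGroup Γ] [Fintype Γ]
    (S : Set Γ) (hsym : -S = S) (χ : AddChar Γ ℂ) :
    (∑ s ∈ S.toFinset, χ s) ∈
      spectrum ℂ (Matrix.of fun a b : Γ => if a - b ∈ S then (1 : ℂ) else 0) := by
  set M : Matrix Γ Γ ℂ := Matrix.of fun a b : Γ => if a - b ∈ S then (1 : ℂ) else 0 with hM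
  set lam : ℂ := ∑ s ∈ S.toFinset, χ s with hlam
  have hvec : M.mulVec ⇑χ = lam • ⇑χ := by
    funext a
    have h1 : M.mulVec ⇑χ a = ∑ b : Γ, (if a - b ∈ S then (1 : ℂ) else 0) * χ b := rfl
    rw [h1]
    have h2 : ∑ b : Γ, (if a - b ∈ S then (1 : ℂ) else 0) * χ b
        = ∑ b ∈ Finset.univ.filter (fun b => a - b ∈ S), χ b := by
      rw [Finset.sum_filter]
      exact Finset.sum_congr rfl fun b _ => by split <;> simp
    have h3 : ∑ b ∈ Finset.univ.filter (fun b => a - b ∈ S), χ b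
        = ∑ s ∈ S.toFinset, χ (a - s) := by
      refine Finset.sum_nbij' (fun b => a - b) (fun s => a - s) ?_ ?_ ?_ ?_ ?_
      · intro b hb; simp only [Finset.mem_filter] at hb; simpa using hb.2
      · intro s hs; simp only [Finset.mem_filter, Finset.mem_univ, true_and]
        simpa using hs
      · intro b _; exact sub_sub_cancel a b
      · intro s _; exact sub_sub_cancel a s
      · intro b _; rw [sub_sub_cancel]
    have h4 : ∑ s ∈ S.toFinset, χ (a - s) = χ a * ∑ s ∈ S.toFinset, χ (-s) := by
      rw [Finset.mul_sum]
      exact Finset.sum_congr rfl fun s _ => by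
        rw [sub_eq_add_neg, AddChar.map_add_eq_mul]
    have h5 : ∑ s ∈ S.toFinset, χ (-s) = ∑ s ∈ S.toFinset, χ s := by
      refine Finset.sum_nbij' (fun s => -s) (fun s => -s) ?_ ?_ ?_ ?_ ?_
      · intro s hs; simp only [Set.mem_toFinset] at hs ⊢
        rw [← hsym]; simpa using hs
      · intro s hs; simp only [Set.mem_toFinset] at hs ⊢
        rw [← hsym] at hs; simpa using hs
      · intro s _; simp
      · intro s _; simp
      · intro s _; rfl
    rw [h2, h3, h4, h5, Pi.smul_apply, smul_eq_mul, hlam, mul_comm]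
  rw [spectrum.mem_iff]
  intro hunit
  have hdet : (algebraMap ℂ (Matrix Γ Γ ℂ) lam - M).det = 0 := by
    rw [← Matrix.exists_mulVec_eq_zero_iff]
    refine ⟨⇑χ, ?_, ?_⟩
    · intro h0
      have := congrFun h0 0
      simp at this
    · rw [Matrix.sub_mulVec, hvec]
      have : (algebraMap ℂ (Matrix Γ Γ ℂ) lam).mulVec ⇑χ = lam • ⇑χ := by
        rw [Algebra.algebraMap_eq_smul_one, Matrix.smul_mulVec, Matrix.one_mulVec]
      rw [this, sub_self]
  exact ((Matrix.isUnit_iff_isUnit_det _).mp hunit).ne_zero hdet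

open Polynomial in
lemma powB {Γ : Type*} [AddCommGroup Γ] [Fintype Γ]
    (χ : AddChar Γ ℂ) (F : Finset Γ) {k : ℤ} (hk : ∑ s ∈ F, χ s = (k : ℂ))
    {m : ℕ} (hm : m.Coprime (Fintype.card Γ)) :
    ∑ s ∈ F, χ s ^ m = (k : ℂ) := by
  haveI : Nonempty Γ := ⟨0⟩
  set n : ℕ+ := ⟨Fintype.card Γ, Fintype.card_pos⟩ with hn
  have hcard : (n : ℕ) = Fintype.card Γ := rfl
  set K := CyclotomicField n ℚ with hK
  haveI : IsCyclotomicExtension {(n : ℕ)} ℚ K :=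
    by convert (inferInstance : @IsCyclotomicExtension {(n : ℕ)} ℚ (CyclotomicField (n : ℕ) ℚ) _ _
      (CyclotomicField.algebra _ _)); exact Subsingleton.elim _ _
  have hν : IsPrimitiveRoot (IsCyclotomicExtension.zeta n ℚ K) (n : ℕ) :=
    IsCyclotomicExtension.zeta_spec n ℚ K
  set ν := IsCyclotomicExtension.zeta n ℚ K with hνdef
  -- embedding into ℂ
  haveI : FiniteDimensional ℚ K := IsCyclotomicExtension.finiteDimensional {(n : ℕ)} ℚ K
  haveI : Algebra.IsAlgebraic ℚ K := Algebra.IsAlgebraic.of_finite ℚ K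
  let f : K →ₐ[ℚ] ℂ := IsAlgClosed.lift
  have hζ : IsPrimitiveRoot (f ν) (n : ℕ) := hν.map_of_injective f.injective
  -- the Galois automorphism sending ν to ν ^ m
  let σ : K ≃ₐ[ℚ] K :=
    (IsCyclotomicExtension.autEquivPow K (cyclotomic.irreducible_rat n.pos)).symm
      (ZMod.unitOfCoprime m (hcard ▸ hm))
  have hσν : σ ν = ν ^ m := by
    have h1 := hν.autToPow_spec ℚ σ
    have h3 : hν.autToPow ℚ σ = ZMod.unitOfCoprime m (hcard ▸ hm) :=
      (IsCyclotomicExtension.autEquivPow K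
        (cyclotomic.irreducible_rat n.pos)).apply_symm_apply _
    rw [h3] at h1
    have h4 : ((ZMod.unitOfCoprime m (hcard ▸ hm) : (ZMod (n:ℕ))ˣ) : ZMod (n:ℕ)).val
        = m % (n : ℕ) := by
      rw [ZMod.coe_unitOfCoprime, ZMod.val_natCast]
    rw [h4] at h1
    rw [← h1]
    conv_rhs => rw [← Nat.div_add_mod m (n : ℕ)]
    rw [pow_add, pow_mul, hν.pow_eq_one, one_pow, one_mul]
  -- write each χ s as a power of f ν
  have hpow : ∀ s : Γ, χ s ^ (n : ℕ) = 1 := fun s => by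
    rw [← AddChar.map_nsmul_eq_pow, hcard, card_nsmul_eq_zero, AddChar.map_zero_eq_one]
  choose e he1 he2 using fun s : Γ => hζ.eq_pow_of_pow_eq_one (hpow s)
  set α : K := ∑ s ∈ F, ν ^ (e s) with hα
  have hfα : f α = (k : ℂ) := by
    rw [hα, map_sum, ← hk]
    exact Finset.sum_congr rfl fun s _ => by rw [map_pow, he2]
  have hαk : α = ((k : ℚ) : K) := by
    apply RingHom.injective (f : K →+* ℂ)
    show f α = f ((k : ℚ) : K)
    rw [hfα, map_ratCast]
    simp
  have hgα : f (σ α) = ∑ s ∈ F, χ s ^ m := by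
    rw [hα, map_sum, map_sum]
    refine Finset.sum_congr rfl fun s _ => ?_
    rw [map_pow, hσν, ← pow_mul, map_pow, mul_comm m (e s), pow_mul, he2]
  rw [← hgα, hαk, map_ratCast, map_ratCast]
  simp

lemma exists_coprime_smul {Γ : Type*} [AddCommGroup Γ] [Fintype Γ] {b c : Γ}
    (h : AddSubgroup.zmultiples b = AddSubgroup.zmultiples c) :
    ∃ m : ℕ, m.Coprime (Fintype.card Γ) ∧ m • b = c := by
  haveI : Nonempty Γ := ⟨0⟩
  haveI : NeZero (Fintype.card Γ) := ⟨Fintype.card_ne_zero⟩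
  set n := Fintype.card Γ with hn
  obtain ⟨u, hu⟩ := AddSubgroup.mem_zmultiples_iff.mp (h ▸ AddSubgroup.mem_zmultiples c)
  obtain ⟨v, hv⟩ := AddSubgroup.mem_zmultiples_iff.mp (h.symm ▸ AddSubgroup.mem_zmultiples b)
  set d := addOrderOf b with hd
  have hvu : (u * v) • b = b := by rw [mul_comm, mul_smul, hu, hv]
  have hdvd : (d : ℤ) ∣ u * v - 1 := by
    rw [addOrderOf_dvd_iff_zsmul_eq_zero, sub_smul, hvu, one_smul, sub_self]
  have hdn : d ∣ n := addOrderOf_dvd_card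
  have hunit : IsUnit ((u : ℤ) : ZMod d) := by
    refine IsUnit.of_mul_eq_one (((v : ℤ) : ZMod d)) ?_
    have h0 : (((u * v - 1 : ℤ)) : ZMod d) = 0 :=
      (ZMod.intCast_zmod_eq_zero_iff_dvd _ _).mpr hdvd
    push_cast at h0
    linear_combination h0
  obtain ⟨t, ht⟩ := ZMod.unitsMap_surjective hdn hunit.unit
  refine ⟨(t : ZMod n).val, ZMod.val_coe_unit_coprime t, ?_⟩
  have hxx : ((((t : ZMod n).val : ℤ)) : ZMod d) = ((u : ℤ) : ZMod d) := by
    have h1 : ZMod.castHom hdn (ZMod d) (t : ZMod n) = ((u : ℤ) : ZMod d) := by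
      have h2 := congrArg Units.val ht
      rw [ZMod.unitsMap_def] at h2
      simpa [IsUnit.unit_spec] using h2
    rw [← h1, ZMod.castHom_apply, ← ZMod.natCast_val]
    push_cast
    rfl
  have hdvd2 : (d : ℤ) ∣ (((t : ZMod n).val : ℤ)) - u := by
    have h3 := (ZMod.intCast_eq_intCast_iff _ _ _).mp hxx
    exact Int.ModEq.dvd h3.symm
  have h4 : (((t : ZMod n).val : ℤ)) • b = u • b := by
    have h0 : ((((t : ZMod n).val : ℤ)) - u) • b = 0 :=
      addOrderOf_dvd_iff_zsmul_eq_zero.mp hdvd2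
    rw [sub_smul] at h0
    exact sub_eq_zero.mp h0
  rw [← natCast_zsmul, h4, hu]

/-- Multiplication by `m` coprime to the group order, as an additive equivalence. -/
noncomputable def smulEquiv {Γ : Type*} [AddCommGroup Γ] [Fintype Γ] (m : ℕ)
    (hm : m.Coprime (Fintype.card Γ)) : Γ ≃+ Γ := by
  refine AddEquiv.ofBijective (AddMonoidHom.mk' (fun x => m • x) (fun a b => smul_add m a b)) ?_
  rw [← Finite.injective_iff_bijective]
  intro x y hxy
  simp only [AddMonoidHom.mk'_apply] at hxy
  have h0 : m • (x - y) = 0 := by rw [smul_sub, hxy, sub_self]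
  have h1 : addOrderOf (x - y) ∣ m := addOrderOf_dvd_of_nsmul_eq_zero h0
  have h2 : addOrderOf (x - y) ∣ Fintype.card Γ := addOrderOf_dvd_card
  have h3 : addOrderOf (x - y) = 1 :=
    Nat.eq_one_of_dvd_coprimes hm h1 h2
  have := AddMonoid.addOrderOf_eq_one_iff.mp h3
  exact sub_eq_zero.mp this

@[simp] lemma smulEquiv_apply {Γ : Type*} [AddCommGroup Γ] [Fintype Γ] (m : ℕ)
    (hm : m.Coprime (Fintype.card Γ)) (x : Γ) : smulEquiv m hm x = m • x := rfl

/-- Precomposition with an additive equivalence, as an equivalence of characters. -/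
def charComp {Γ : Type*} [AddCommGroup Γ] (φ : Γ ≃+ Γ) : AddChar Γ ℂ ≃ AddChar Γ ℂ where
  toFun χ := χ.compAddMonoidHom φ.toAddMonoidHom
  invFun χ := χ.compAddMonoidHom φ.symm.toAddMonoidHom
  left_inv χ := by ext x; simp
  right_inv χ := by ext x; simp

@[simp] lemma charComp_apply {Γ : Type*} [AddCommGroup Γ] (φ : Γ ≃+ Γ) (χ : AddChar Γ ℂ)
    (x : Γ) : charComp φ χ x = χ (φ x) := rfl

open scoped Classical in
lemma smul_mem_of_char_sum {Γ : Type*} [AddCommGroup Γ] [Fintype Γ] (S : Set Γ) {m : ℕ}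
    (hm : m.Coprime (Fintype.card Γ))
    (hB : ∀ χ : AddChar Γ ℂ, ∑ s ∈ S.toFinset, χ (m • s) = ∑ s ∈ S.toFinset, χ s)
    {x : Γ} (hx : x ∈ S) : m • x ∈ S := by
  haveI : Nonempty Γ := ⟨0⟩
  have key : ∀ y : Γ, ∑ χ : AddChar Γ ℂ, ∑ s ∈ S.toFinset, χ (s - y)
      = if y ∈ S.toFinset then (Fintype.card Γ : ℂ) else 0 := by
    intro y
    rw [Finset.sum_comm]
    have h1 : ∀ s ∈ S.toFinset, ∑ χ : AddChar Γ ℂ, χ (s - y)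
        = if s = y then (Fintype.card Γ : ℂ) else 0 := by
      intro s _
      rw [AddChar.sum_apply_eq_ite]
      simp [sub_eq_zero]
    rw [Finset.sum_congr rfl h1, Finset.sum_ite_eq' S.toFinset y
      (fun _ => (Fintype.card Γ : ℂ))]
  have step1 : ∀ χ : AddChar Γ ℂ, ∑ s ∈ S.toFinset, χ (s - m • x)
      = ∑ s ∈ S.toFinset, (charComp (smulEquiv m hm) χ) (s - x) := by
    intro χ
    calc ∑ s ∈ S.toFinset, χ (s - m • x)
        = (∑ s ∈ S.toFinset, χ s) * χ (-(m • x)) := by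
          rw [Finset.sum_mul]
          exact Finset.sum_congr rfl fun s _ => by
            rw [sub_eq_add_neg, AddChar.map_add_eq_mul]
      _ = (∑ s ∈ S.toFinset, χ (m • s)) * χ (-(m • x)) := by rw [hB χ]
      _ = ∑ s ∈ S.toFinset, (charComp (smulEquiv m hm) χ) (s - x) := by
          rw [Finset.sum_mul]
          refine Finset.sum_congr rfl fun s _ => ?_
          rw [charComp_apply, smulEquiv_apply, smul_sub, sub_eq_add_neg,
            AddChar.map_add_eq_mul]
  have trans : ∑ χ : AddChar Γ ℂ, ∑ s ∈ S.toFinset, χ (s - m • x)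
      = ∑ χ : AddChar Γ ℂ, ∑ s ∈ S.toFinset, χ (s - x) := by
    rw [Finset.sum_congr rfl fun χ _ => step1 χ]
    exact Equiv.sum_comp (charComp (smulEquiv m hm)) (fun χ => ∑ s ∈ S.toFinset, χ (s - x))
  have h2 := (key (m • x)).symm.trans (trans.trans (key x))
  rw [if_pos (Set.mem_toFinset.mpr hx)] at h2
  by_contra hmx
  rw [if_neg (fun hc => hmx (Set.mem_toFinset.mp hc))] at h2
  exact (Nat.cast_ne_zero.mpr (Fintype.card_ne_zero)).symm
    (by exact_mod_cast h2)

open scoped Classical in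
theorem atom_subset_or_disjoint_of_integral {Γ : Type*} [AddCommGroup Γ] [Fintype Γ]
    (S : Set Γ) (hne : S.Nonempty) (hsym : -S = S)
    (hint : ∀ μ ∈ spectrum ℂ (Matrix.of fun a b : Γ => if a - b ∈ S then (1 : ℂ) else 0),
      ∃ k : ℤ, μ = (k : ℂ)) :
    ∀ a : Γ, Atom a ⊆ S ∨ Atom a ∩ S = ∅ := by
  intro a
  rcases eq_or_ne (Atom a ∩ S) ∅ with h | h
  · right; exact h
  left
  obtain ⟨b, hbA, hbS⟩ := Set.nonempty_iff_ne_empty.mpr h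
  intro c hcA
  have hbc : AddSubgroup.zmultiples b = AddSubgroup.zmultiples c :=
    (hbA : AddSubgroup.zmultiples a = _).symm.trans hcA
  obtain ⟨m, hm, hmbc⟩ := exists_coprime_smul hbc
  have hB : ∀ χ : AddChar Γ ℂ, ∑ s ∈ S.toFinset, χ (m • s) = ∑ s ∈ S.toFinset, χ s := by
    intro χ
    obtain ⟨k, hk⟩ := hint _ (specA S hsym χ)
    calc ∑ s ∈ S.toFinset, χ (m • s)
        = ∑ s ∈ S.toFinset, χ s ^ m :=
          Finset.sum_congr rfl fun s _ => AddChar.map_nsmul_eq_pow χ m s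
      _ = (k : ℂ) := powB χ S.toFinset hk hm
      _ = ∑ s ∈ S.toFinset, χ s := hk.symm
  have hmem := smul_mem_of_char_sum S hm hB hbS
  rwa [hmbc] at hmem
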